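/- arXiv:2107.00669 — 2 statements merged into one kernel-verified Lean document; each statement's English description precedes it below -/
import Mathlib

section
/- If x and y are basis elements of C(□^n) satisfying x ≤ y in the componentwise partial order, then CS(x ∗ y) = CS(x) ∗ CS(y), where the join on the left is the cubical join and on the right the simplicial join. -/
/-- The three cells of the interval: `[0]`, `[0,1]` (written `mid`), and `[1]`. -/
inductive CubeF : Type
  | zero : CubeF
  | mid : CubeF
  | one : CubeF
  deriving DecidableEq

namespace CartanSerre

/-- Basis elements of the cubical chain complex `C(□^n)`: tensors `x_1 ⊗ ⋯ ⊗ x_n`. -/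
abbrev CubeB (n : ℕ) := Fin n → CubeF
/-- The cubical chain complex `C(□^n)` (as the free ℤ-module on its basis). -/
abbrev CubeChain (n : ℕ) := CubeB n →₀ ℤ
/-- `C(□^n) ⊗ C(□^n)`, modeled as the free ℤ-module on pairs of basis elements. -/
abbrev CubeChain2 (n : ℕ) := (CubeB n × CubeB n) →₀ ℤ
/-- Basis elements of `C(Δ^n)`: strictly increasing tuples `[v_0, …, v_m]` with
`v_i ∈ {0,…,n}`, i.e. nonempty finite subsets of `Fin (n+1)` (`∅` is not used). -/
abbrev SimpB (n : ℕ) := Finset (Fin (n + 1))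
/-- The normalized simplicial chain complex `C(Δ^n)`. -/
abbrev SimpChain (n : ℕ) := SimpB n →₀ ℤ
/-- `C(Δ^n) ⊗ C(Δ^n)`. -/
abbrev SimpChain2 (n : ℕ) := (SimpB n × SimpB n) →₀ ℤ

/-- Degree of a cubical basis element: the number of factors equal to `[0,1]`. -/
def cubeDeg {n : ℕ} (x : CubeB n) : ℕ :=
  (Finset.univ.filter fun i => x i = CubeF.mid).card

/-- Degree of a simplicial basis element `[v_0, …, v_m]`, namely `m`. -/
def simpDeg {n : ℕ} (s : SimpB n) : ℕ := s.card - 1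

/-- The cubical boundary on a basis element. -/
noncomputable def cubeBdFun (n : ℕ) (x : CubeB n) : CubeChain n :=
  ∑ i ∈ Finset.univ.filter (fun i => x i = CubeF.mid),
    ((-1 : ℤ) ^ (Finset.univ.filter fun j => j < i ∧ x j = CubeF.mid).card) •
      (Finsupp.single (Function.update x i CubeF.one) 1 -
        Finsupp.single (Function.update x i CubeF.zero) 1)

/-- The cubical boundary `∂ : C(□^n) → C(□^n)`. -/
noncomputable def cubeBd (n : ℕ) : CubeChain n →ₗ[ℤ] CubeChain n :=
  Finsupp.lift (CubeChain n) ℤ (CubeB n) (cubeBdFun n)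

/-- The (normalized) simplicial boundary on a basis element. -/
noncomputable def simpBdFun (n : ℕ) (s : SimpB n) : SimpChain n :=
  if 2 ≤ s.card then
    ∑ v ∈ s, ((-1 : ℤ) ^ (s.filter fun w => w < v).card) • Finsupp.single (s.erase v) 1
  else 0

/-- The simplicial boundary `∂ : C(Δ^n) → C(Δ^n)`. -/
noncomputable def simpBd (n : ℕ) : SimpChain n →ₗ[ℤ] SimpChain n :=
  Finsupp.lift (SimpChain n) ℤ (SimpB n) (simpBdFun n)

/-- `p(x) - 1` (0-indexed): the first position of a factor `[0]`, or `n` if there is none. -/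
def pIdx {n : ℕ} (x : CubeB n) : Fin (n + 1) :=
  ⟨(List.ofFn x).findIdx (fun c => decide (c = CubeF.zero)), by
    have h : (List.ofFn x).findIdx (fun c => decide (c = CubeF.zero)) ≤ (List.ofFn x).length :=
      List.findIdx_le_length
    simp only [List.length_ofFn] at h
    omega⟩

/-- The vertex set `[q_1 - 1, …, q_m - 1, p(x) - 1]` of the image of `x` under `CS`. -/
def csSet {n : ℕ} (x : CubeB n) : SimpB n :=
  insert (pIdx x) ((Finset.univ.filter fun i => x i = CubeF.mid).image Fin.castSucc)

/-- The Cartan–Serre map `CS` on a cubical basis element. -/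
noncomputable def csFun (n : ℕ) (x : CubeB n) : SimpChain n :=
  if ∃ i j : Fin n, i < j ∧ x i = CubeF.zero ∧ x j = CubeF.mid then 0
  else Finsupp.single (csSet x) 1

/-- The Cartan–Serre chain map `CS : C(□^n) → C(Δ^n)`. -/
noncomputable def csL (n : ℕ) : CubeChain n →ₗ[ℤ] SimpChain n :=
  Finsupp.lift (SimpChain n) ℤ (CubeB n) (csFun n)

/-- The cubical counit `ε_□ : C(□^n) → ℤ`. -/
noncomputable def cubeEps (n : ℕ) : CubeChain n →ₗ[ℤ] ℤ :=
  Finsupp.lift ℤ ℤ (CubeB n) (fun x => if cubeDeg x = 0 then (1 : ℤ) else 0)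

/-- The simplicial counit `ε_Δ : C(Δ^n) → ℤ`. -/
noncomputable def simpEps (n : ℕ) : SimpChain n →ₗ[ℤ] ℤ :=
  Finsupp.lift ℤ ℤ (SimpB n) (fun s => if s.card = 1 then (1 : ℤ) else 0)

/-- Tensor product of two elements of free modules, in the product-basis model. -/
noncomputable def tensorF {α β : Type*} (a : α →₀ ℤ) (b : β →₀ ℤ) : (α × β) →₀ ℤ :=
  a.sum fun i r => b.sum fun j s => Finsupp.single (i, j) (r * s)

/-- Left factor of the Serre diagonal summand indexed by `S`:
factors in `S` contribute `[0,1]`, the other `[0,1]`-factors contribute `[0]`. -/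
def serreL {n : ℕ} (x : CubeB n) (S : Finset (Fin n)) : CubeB n := fun i =>
  if x i = CubeF.mid then (if i ∈ S then CubeF.mid else CubeF.zero) else x i

/-- Right factor of the Serre diagonal summand indexed by `S`. -/
def serreR {n : ℕ} (x : CubeB n) (S : Finset (Fin n)) : CubeB n := fun i =>
  if x i = CubeF.mid then (if i ∈ S then CubeF.one else CubeF.mid) else x i

/-- Koszul sign exponent of the Serre diagonal summand indexed by `S`. -/
def serreSign {n : ℕ} (x : CubeB n) (S : Finset (Fin n)) : ℕ :=
  ((Finset.univ : Finset (Fin n × Fin n)).filter fun p =>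
    p.1 < p.2 ∧ x p.1 = CubeF.mid ∧ p.1 ∉ S ∧ p.2 ∈ S).card

/-- The Serre diagonal `Δ_□` on a basis element: the tensor product (with Koszul
signs) of `Δ[0] = [0]⊗[0]`, `Δ[1] = [1]⊗[1]`, `Δ[0,1] = [0]⊗[0,1] + [0,1]⊗[1]`. -/
noncomputable def serreDiagFun (n : ℕ) (x : CubeB n) : CubeChain2 n :=
  ∑ S ∈ (Finset.univ.filter fun i => x i = CubeF.mid).powerset,
    ((-1 : ℤ) ^ serreSign x S) • Finsupp.single (serreL x S, serreR x S) 1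

/-- The Serre diagonal `Δ_□ : C(□^n) → C(□^n) ⊗ C(□^n)`. -/
noncomputable def serreDiag (n : ℕ) : CubeChain n →ₗ[ℤ] CubeChain2 n :=
  Finsupp.lift (CubeChain2 n) ℤ (CubeB n) (serreDiagFun n)

/-- The Alexander–Whitney coproduct on a basis element:
`Δ_AW [v_0,…,v_m] = Σ_i [v_0,…,v_i] ⊗ [v_i,…,v_m]`. -/
noncomputable def awFun (n : ℕ) (s : SimpB n) : SimpChain2 n :=
  ∑ v ∈ s, Finsupp.single (s.filter fun w => w ≤ v, s.filter fun w => v ≤ w) 1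

/-- The Alexander–Whitney coproduct `Δ_AW : C(Δ^n) → C(Δ^n) ⊗ C(Δ^n)`. -/
noncomputable def awDiag (n : ℕ) : SimpChain n →ₗ[ℤ] SimpChain2 n :=
  Finsupp.lift (SimpChain2 n) ℤ (SimpB n) (awFun n)

/-- `CS ⊗ CS : C(□^n) ⊗ C(□^n) → C(Δ^n) ⊗ C(Δ^n)` (no Koszul signs: `CS` has degree 0). -/
noncomputable def cs2L (n : ℕ) : CubeChain2 n →ₗ[ℤ] SimpChain2 n :=
  Finsupp.lift (SimpChain2 n) ℤ (CubeB n × CubeB n)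
    (fun p => tensorF (csFun n p.1) (csFun n p.2))

/-- The join on single cube factors: `[0] ∗ [1] = [0,1]`, `[1] ∗ [0] = -[0,1]`,
all other joins of basis elements vanish (the outcome factor being `[0,1]`). -/
def joinF : CubeF → CubeF → ℤ
  | CubeF.zero, CubeF.one => 1
  | CubeF.one, CubeF.zero => -1
  | _, _ => 0

/-- The cubical join `∗` on basis elements. -/
noncomputable def cubeJoinFun (n : ℕ) (x y : CubeB n) : CubeChain n :=
  ((-1 : ℤ) ^ cubeDeg x) •
    ∑ l : Fin n,
      ((if (∀ j, j < l → y j ≠ CubeF.mid) ∧ (∀ j, l < j → x j ≠ CubeF.mid) then (1 : ℤ) else 0) *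
          joinF (x l) (y l)) •
        Finsupp.single (fun j => if j < l then x j else if j = l then CubeF.mid else y j) 1

/-- The cubical join, extended bilinearly to chains. -/
noncomputable def cubeJoinC (n : ℕ) (a b : CubeChain n) : CubeChain n :=
  a.sum fun x r => b.sum fun y s => (r * s) • cubeJoinFun n x y

/-- The simplicial join `∗` on basis elements: `0` if the vertex sets meet, and
otherwise `(-1)^{p + |σ|}` times the union, `|σ|` counting the inversions. -/
noncomputable def simpJoinFun (n : ℕ) (s t : SimpB n) : SimpChain n :=
  if s ∩ t = ∅ ∧ s.Nonempty ∧ t.Nonempty then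
    ((-1 : ℤ) ^ ((s.card - 1) + ((s ×ˢ t).filter fun p => p.2 < p.1).card)) •
      Finsupp.single (s ∪ t) 1
  else 0

/-- The simplicial join, extended bilinearly to chains. -/
noncomputable def simpJoinC (n : ℕ) (a b : SimpChain n) : SimpChain n :=
  a.sum fun s r => b.sum fun t u => (r * u) • simpJoinFun n s t

/-- The linear order `[0] < [0,1] < [1]` on interval cells, via `0 < 1 < 2`. -/
def cellVal : CubeF → ℕ
  | CubeF.zero => 0
  | CubeF.mid => 1
  | CubeF.one => 2

/-- The componentwise partial order on cubical basis elements,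
with `[0] < [0,1] < [1]` on each factor. -/
def cubeLe {n : ℕ} (x y : CubeB n) : Prop := ∀ i, cellVal (x i) ≤ cellVal (y i)

/-- Left-parenthesized iterated join of a nonempty list (the base case `[]` is junk). -/
noncomputable def foldJoin {C : Type*} (join : C → C → C) (z : C) : List C → C
  | [] => z
  | a :: l => l.foldl join a

/-- Left-parenthesized iterated cubical join `∗^{k}` of `k+1` basis elements. -/
noncomputable def iterCubeJoin (n k : ℕ) (f : Fin (k + 1) → CubeB n) : CubeChain n :=
  foldJoin (cubeJoinC n) 0 (List.ofFn fun i : Fin (k + 1) => (Finsupp.single (f i) 1 : CubeChain n))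

/-- Left-parenthesized iterated simplicial join `∗^{k}` of `k+1` chains. -/
noncomputable def iterSimpJoin (n k : ℕ) (g : Fin (k + 1) → SimpChain n) : SimpChain n :=
  foldJoin (simpJoinC n) 0 (List.ofFn g)

/-- The iterated Serre diagonal `Δ_□^k` on a basis element, with `k+1` output factors
(iterated on the last factor; this is unambiguous by coassociativity, and no Koszul
signs appear since `Δ_□` has degree `0`). -/
noncomputable def serreIterFun (n : ℕ) : (k : ℕ) → CubeB n → ((Fin (k + 1) → CubeB n) →₀ ℤ)
  | 0, x => Finsupp.single (fun _ => x) 1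
  | k + 1, x =>
    (serreIterFun n k x).sum fun f c =>
      (serreDiagFun n (f (Fin.last k))).sum fun p d =>
        Finsupp.single
          (fun i : Fin (k + 2) =>
            if h : (i : ℕ) < k then f ⟨(i : ℕ), by omega⟩
            else if (i : ℕ) = k then p.1 else p.2) (c * d)

/-- The iterated Serre diagonal `Δ_□^k : C(□^n) → C(□^n)^{⊗(k+1)}`. -/
noncomputable def serreIter (n k : ℕ) : CubeChain n →ₗ[ℤ] ((Fin (k + 1) → CubeB n) →₀ ℤ) :=
  Finsupp.lift _ ℤ (CubeB n) (serreIterFun n k)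

/-- The iterated Alexander–Whitney coproduct `Δ_AW^k` on a basis element. -/
noncomputable def awIterFun (n : ℕ) : (k : ℕ) → SimpB n → ((Fin (k + 1) → SimpB n) →₀ ℤ)
  | 0, s => Finsupp.single (fun _ => s) 1
  | k + 1, s =>
    (awIterFun n k s).sum fun f c =>
      (awFun n (f (Fin.last k))).sum fun p d =>
        Finsupp.single
          (fun i : Fin (k + 2) =>
            if h : (i : ℕ) < k then f ⟨(i : ℕ), by omega⟩
            else if (i : ℕ) = k then p.1 else p.2) (c * d)

/-- The iterated Alexander–Whitney coproduct `Δ_AW^k : C(Δ^n) → C(Δ^n)^{⊗(k+1)}`. -/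
noncomputable def awIter (n k : ℕ) : SimpChain n →ₗ[ℤ] ((Fin (k + 1) → SimpB n) →₀ ℤ) :=
  Finsupp.lift _ ℤ (SimpB n) (awIterFun n k)

/-- The action of a permutation `τ` on a `k`-fold tensor of basis elements,
with the Koszul sign determined by the degrees of the factors it transposes. -/
noncomputable def koszulPermFun {α : Type*} (deg : α → ℕ) {k : ℕ} (τ : Equiv.Perm (Fin k))
    (f : Fin k → α) : (Fin k → α) →₀ ℤ :=
  ((-1 : ℤ) ^ ∑ p ∈ (Finset.univ : Finset (Fin k × Fin k)).filter
      (fun p => p.1 < p.2 ∧ τ p.2 < τ p.1), deg (f (τ p.1)) * deg (f (τ p.2))) •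
    Finsupp.single (fun i => f (τ i)) 1

/-- The action of a permutation on `k`-fold tensors, with Koszul signs. -/
noncomputable def koszulPerm {α : Type*} (deg : α → ℕ) {k : ℕ} (τ : Equiv.Perm (Fin k)) :
    ((Fin k → α) →₀ ℤ) →ₗ[ℤ] ((Fin k → α) →₀ ℤ) :=
  Finsupp.lift _ ℤ (Fin k → α) (koszulPermFun deg τ)

/-- Tensor product of an `r`-tuple of elements of a free module, product-basis model. -/
noncomputable def tensorPi {r : ℕ} {α : Type*} [DecidableEq α] (c : Fin r → (α →₀ ℤ)) :
    (Fin r → α) →₀ ℤ :=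
  ∑ g ∈ Fintype.piFinset (fun i => (c i).support), Finsupp.single g (∏ i, (c i) (g i))

/-- `CS^{⊗ r} : C(□^n)^{⊗ r} → C(Δ^n)^{⊗ r}` (no Koszul signs: `CS` has degree 0). -/
noncomputable def csTensor (n r : ℕ) : ((Fin r → CubeB n) →₀ ℤ) →ₗ[ℤ] ((Fin r → SimpB n) →₀ ℤ) :=
  Finsupp.lift _ ℤ (Fin r → CubeB n) (fun f => tensorPi fun i => csFun n (f i))

/-- The index in `Fin (k_1 + ⋯ + k_r)` of the `j`-th tensor factor of the `i`-th block. -/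
def blockIdx {r : ℕ} (K : Fin r → ℕ) {m : ℕ} (hm : m + 1 = ∑ i, K i) (i : Fin r)
    (j : Fin (K i)) : Fin (m + 1) :=
  ⟨(∑ j' ∈ Finset.univ.filter (fun j' => j' < i), K j') + (j : ℕ), by
    have h2 : (j : ℕ) < K i := j.isLt
    have h3 : K i + ∑ j' ∈ Finset.univ.filter (fun j' => j' < i), K j' ≤ ∑ i', K i' := by
      rw [← Finset.sum_insert (a := i) (s := Finset.univ.filter (fun j' => j' < i)) (by simp)]
      exact Finset.sum_le_sum_of_subset (Finset.subset_univ _)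
    omega⟩

/-- A `(k_1, …, k_r)`-shuffle: a permutation increasing on each block. -/
def IsShuffle {r : ℕ} (K : Fin r → ℕ) {m : ℕ} (hm : m + 1 = ∑ i, K i)
    (σ : Equiv.Perm (Fin (m + 1))) : Prop :=
  ∀ (i : Fin r) (j j' : Fin (K i)), j < j' → σ (blockIdx K hm i j) < σ (blockIdx K hm i j')

/-- Total degree of the `i`-th block of a `k`-fold cubical tensor. -/
def cubeBlockDeg {n r : ℕ} (K : Fin r → ℕ) {m : ℕ} (hm : m + 1 = ∑ i, K i)
    (f : Fin (m + 1) → CubeB n) (i : Fin r) : ℕ :=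
  ∑ j : Fin (K i), cubeDeg (f (blockIdx K hm i j))

/-- Total degree of the `i`-th block of a `k`-fold simplicial tensor. -/
def simpBlockDeg {n r : ℕ} (K : Fin r → ℕ) {m : ℕ} (hm : m + 1 = ∑ i, K i)
    (f : Fin (m + 1) → SimpB n) (i : Fin r) : ℕ :=
  ∑ j : Fin (K i), simpDeg (f (blockIdx K hm i j))

/-- `∗^{k_1 - 1} ⊗ ⋯ ⊗ ∗^{k_r - 1}` on a cubical `k`-fold tensor basis element, with
the Koszul sign for applying the degree-`(k_i - 1)` maps across the earlier blocks. -/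
noncomputable def cubeBlockJoinFun (n r : ℕ) (K : Fin r → ℕ) {m : ℕ} (hm : m + 1 = ∑ i, K i)
    (f : Fin (m + 1) → CubeB n) : (Fin r → CubeB n) →₀ ℤ :=
  ((-1 : ℤ) ^ ∑ p ∈ (Finset.univ : Finset (Fin r × Fin r)).filter (fun p => p.1 < p.2),
      (K p.2 - 1) * cubeBlockDeg K hm f p.1) •
    tensorPi (fun i : Fin r =>
      foldJoin (cubeJoinC n) 0
        (List.ofFn fun j : Fin (K i) => (Finsupp.single (f (blockIdx K hm i j)) 1 : CubeChain n)))

/-- `∗^{k_1 - 1} ⊗ ⋯ ⊗ ∗^{k_r - 1} : C(□^n)^{⊗ k} → C(□^n)^{⊗ r}`. -/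
noncomputable def cubeBlockJoin (n r : ℕ) (K : Fin r → ℕ) {m : ℕ} (hm : m + 1 = ∑ i, K i) :
    ((Fin (m + 1) → CubeB n) →₀ ℤ) →ₗ[ℤ] ((Fin r → CubeB n) →₀ ℤ) :=
  Finsupp.lift _ ℤ (Fin (m + 1) → CubeB n) (cubeBlockJoinFun n r K hm)

/-- `∗^{k_1 - 1} ⊗ ⋯ ⊗ ∗^{k_r - 1}` on a simplicial `k`-fold tensor basis element. -/
noncomputable def simpBlockJoinFun (n r : ℕ) (K : Fin r → ℕ) {m : ℕ} (hm : m + 1 = ∑ i, K i)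
    (f : Fin (m + 1) → SimpB n) : (Fin r → SimpB n) →₀ ℤ :=
  ((-1 : ℤ) ^ ∑ p ∈ (Finset.univ : Finset (Fin r × Fin r)).filter (fun p => p.1 < p.2),
      (K p.2 - 1) * simpBlockDeg K hm f p.1) •
    tensorPi (fun i : Fin r =>
      foldJoin (simpJoinC n) 0
        (List.ofFn fun j : Fin (K i) => (Finsupp.single (f (blockIdx K hm i j)) 1 : SimpChain n)))

/-- `∗^{k_1 - 1} ⊗ ⋯ ⊗ ∗^{k_r - 1} : C(Δ^n)^{⊗ k} → C(Δ^n)^{⊗ r}`. -/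
noncomputable def simpBlockJoin (n r : ℕ) (K : Fin r → ℕ) {m : ℕ} (hm : m + 1 = ∑ i, K i) :
    ((Fin (m + 1) → SimpB n) →₀ ℤ) →ₗ[ℤ] ((Fin r → SimpB n) →₀ ℤ) :=
  Finsupp.lift _ ℤ (Fin (m + 1) → SimpB n) (simpBlockJoinFun n r K hm)

/-- A chain is homogeneous of degree `m` if its support is contained in degree-`m` basis elements. -/
def cubeHomog (n m : ℕ) (c : CubeChain n) : Prop := ∀ x ∈ c.support, cubeDeg x = m

/-- A simplicial chain is homogeneous of degree `m` if every basis element in its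
support is a strictly increasing tuple `[v_0, …, v_m]`, i.e. has `m+1` vertices. -/
def simpHomog (n m : ℕ) (c : SimpChain n) : Prop := ∀ s ∈ c.support, s.card = m + 1

variable {n : ℕ}

lemma pIdx_eq (x : CubeB n) (k : Fin (n+1)) (h1 : ∀ j : Fin n, (j:ℕ) < k → x j ≠ .zero)
    (h2 : ∀ hk : (k:ℕ) < n, x ⟨k, hk⟩ = .zero) : pIdx x = k := by
  have hlen : (List.ofFn x).length = n := List.length_ofFn
  apply Fin.ext
  show List.findIdx _ _ = _
  rcases lt_or_eq_of_le (Nat.lt_succ_iff.mp k.isLt) with hk | hk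
  · rw [List.findIdx_eq (by omega)]
    constructor
    · simp only [List.getElem_ofFn]
      exact decide_eq_true (h2 hk)
    · intro j hj
      simp only [List.getElem_ofFn]
      exact decide_eq_false (h1 ⟨j, by omega⟩ hj)
  · rw [hk]
    have hle : (List.ofFn x).findIdx (fun c => decide (c = CubeF.zero)) ≤ (List.ofFn x).length :=
      List.findIdx_le_length
    rw [hlen] at hle
    rcases lt_or_eq_of_le hle with hlt | heq
    · exfalso
      have hg := List.findIdx_getElem (p := fun c => decide (c = CubeF.zero)) (xs := List.ofFn x)
        (w := by omega)
      simp only [List.getElem_ofFn] at hg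
      refine h1 ⟨List.findIdx (fun c => decide (c = CubeF.zero)) (List.ofFn x), by omega⟩
        (by simp only [Fin.val_mk]; omega) ?_
      simpa using hg
    · exact heq

lemma x_pIdx (x : CubeB n) (h : ((pIdx x : ℕ)) < n) : x ⟨pIdx x, h⟩ = .zero := by
  have := List.findIdx_getElem (p := fun c => decide (c = CubeF.zero)) (xs := List.ofFn x)
    (w := by rw [List.length_ofFn]; exact h)
  simp only [List.getElem_ofFn] at this
  have h' : x ⟨List.findIdx (fun c => decide (c = CubeF.zero)) (List.ofFn x), h⟩ = CubeF.zero := by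
    simpa using this
  exact h'

lemma ne_zero_of_lt_pIdx (x : CubeB n) (j : Fin n) (h : (j:ℕ) < (pIdx x : ℕ)) : x j ≠ .zero := by
  have := List.not_of_lt_findIdx (p := fun c => decide (c = CubeF.zero)) (xs := List.ofFn x)
    (i := j) (by exact h)
  simp only [List.getElem_ofFn, Fin.eta] at this
  simpa using this
lemma csL_single (z : CubeB n) (c : ℤ) : csL n (Finsupp.single z c) = c • csFun n z := by
  unfold csL
  rw [Finsupp.lift_apply, Finsupp.sum_single_index (by rw [zero_smul])]

lemma csL_join (x y : CubeB n) :
    csL n (cubeJoinFun n x y) = ((-1 : ℤ) ^ cubeDeg x) •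
      ∑ l : Fin n,
      ((if (∀ j, j < l → y j ≠ CubeF.mid) ∧ (∀ j, l < j → x j ≠ CubeF.mid) then (1 : ℤ) else 0) *
          joinF (x l) (y l)) •
        csFun n (fun j => if j < l then x j else if j = l then CubeF.mid else y j) := by
  unfold cubeJoinFun
  rw [map_smul, map_sum]
  congr 1
  refine Finset.sum_congr rfl fun l _ => ?_
  rw [map_smul, csL_single, one_smul]

lemma simpJoinC_single (s t : SimpB n) (a b : ℤ) :
    simpJoinC n (Finsupp.single s a) (Finsupp.single t b) = (a * b) • simpJoinFun n s t := by
  unfold simpJoinC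
  rw [Finsupp.sum_single_index (by simp), Finsupp.sum_single_index (by simp)]

lemma simpJoinC_zero_left (b : SimpChain n) : simpJoinC n 0 b = 0 := by
  unfold simpJoinC
  rw [Finsupp.sum_zero_index]

lemma simpJoinC_zero_right (a : SimpChain n) : simpJoinC n a 0 = 0 := by
  unfold simpJoinC
  simp [Finsupp.sum_zero_index]

lemma mem_csSet {x : CubeB n} {a : Fin (n+1)} :
    a ∈ csSet x ↔ a = pIdx x ∨ ∃ i, x i = CubeF.mid ∧ Fin.castSucc i = a := by
  unfold csSet
  simp [Finset.mem_insert, Finset.mem_image, Finset.mem_filter]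

lemma joinF_cases {a b : CubeF} (hle : cellVal a ≤ cellVal b) (hne : joinF a b ≠ 0) :
    a = CubeF.zero ∧ b = CubeF.one := by
  cases a <;> cases b <;> simp_all [joinF, cellVal]

lemma pIdx_le {x : CubeB n} {j : Fin n} (h : x j = CubeF.zero) : ((pIdx x : ℕ)) ≤ j := by
  by_contra hc
  exact ne_zero_of_lt_pIdx x j (by omega) h
lemma cell_zero {a : CubeF} (h : cellVal a ≤ cellVal CubeF.zero) : a = CubeF.zero := by
  cases a <;> simp [cellVal] at h ⊢

lemma cell_one {a : CubeF} (h : cellVal CubeF.one ≤ cellVal a) : a = CubeF.one := by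
  cases a <;> simp [cellVal] at h ⊢

lemma csFun_eq_zero {z : CubeB n}
    (hd : ∃ i j : Fin n, i < j ∧ z i = CubeF.zero ∧ z j = CubeF.mid) : csFun n z = 0 := by
  unfold csFun; rw [if_pos hd]

lemma csFun_eq_single {z : CubeB n}
    (hd : ¬ ∃ i j : Fin n, i < j ∧ z i = CubeF.zero ∧ z j = CubeF.mid) :
    csFun n z = Finsupp.single (csSet z) 1 := by
  unfold csFun; rw [if_neg hd]
end CartanSerre

open CartanSerre in
/-- If `x ≤ y` in the componentwise partial order on the basis of
`C(□^n)`, then `CS(x ∗ y) = CS(x) ∗ CS(y)` (cubical join on the left, simplicial join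
on the right). -/
theorem cartanSerre_join_of_le (n : ℕ) (x y : CubeB n) (h : cubeLe x y) :
    csL n (cubeJoinFun n x y) = simpJoinC n (csFun n x) (csFun n y) := by
  have hle : ∀ i, cellVal (x i) ≤ cellVal (y i) := h
  rw [csL_join]
  by_cases hx : ∃ i j : Fin n, i < j ∧ x i = CubeF.zero ∧ x j = CubeF.mid
  · -- x degenerate: both sides vanish
    rw [csFun_eq_zero hx, simpJoinC_zero_left]
    obtain ⟨i, j, hij, hxi, hxj⟩ := hx
    rw [Finset.sum_eq_zero, smul_zero]
    intro l _
    by_cases hP : (∀ j, j < l → y j ≠ CubeF.mid) ∧ (∀ j, l < j → x j ≠ CubeF.mid)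
    · by_cases hJ : joinF (x l) (y l) = 0
      · rw [hJ, mul_zero, zero_smul]
      · obtain ⟨hx0, _⟩ := joinF_cases (hle l) hJ
        have hjl : j < l := by
          rcases lt_trichotomy j l with h' | h' | h'
          · exact h'
          · exfalso; rw [h', hx0] at hxj; cases hxj
          · exact absurd hxj (hP.2 j h')
        have hz : csFun n
            (fun k => if k < l then x k else if k = l then CubeF.mid else y k) = 0 := by
          apply csFun_eq_zero
          refine ⟨i, j, hij, ?_, ?_⟩
          · rw [if_pos (hij.trans hjl)]; exact hxi
          · rw [if_pos hjl]; exact hxj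
        rw [hz, smul_zero]
    · rw [if_neg hP, zero_mul, zero_smul]
  by_cases hy : ∃ i j : Fin n, i < j ∧ y i = CubeF.zero ∧ y j = CubeF.mid
  · -- y degenerate: both sides vanish
    rw [csFun_eq_zero hy, simpJoinC_zero_right]
    obtain ⟨i, j, hij, hyi, hyj⟩ := hy
    rw [Finset.sum_eq_zero, smul_zero]
    intro l _
    by_cases hP : (∀ j, j < l → y j ≠ CubeF.mid) ∧ (∀ j, l < j → x j ≠ CubeF.mid)
    · by_cases hJ : joinF (x l) (y l) = 0
      · rw [hJ, mul_zero, zero_smul]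
      · obtain ⟨hx0, hy1⟩ := joinF_cases (hle l) hJ
        have hjl : l < j := by
          rcases lt_trichotomy j l with h' | h' | h'
          · exact absurd hyj (hP.1 j h')
          · exfalso; rw [h', hy1] at hyj; cases hyj
          · exact h'
        have hz : csFun n
            (fun k => if k < l then x k else if k = l then CubeF.mid else y k) = 0 := by
          apply csFun_eq_zero
          rcases lt_trichotomy i l with h' | h' | h'
          · -- pair (i, l): x i = 0 since x i ≤ y i = 0
            have hxi : x i = CubeF.zero := by
              have := hle i; rw [hyi] at this; exact cell_zero this
            refine ⟨i, l, h', ?_, ?_⟩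
            · rw [if_pos h']; exact hxi
            · rw [if_neg (lt_irrefl l), if_pos rfl]
          · exfalso; rw [h', hy1] at hyi; cases hyi
          · refine ⟨i, j, hij, ?_, ?_⟩
            · rw [if_neg (asymm h'), if_neg (ne_of_gt h')]; exact hyi
            · rw [if_neg (asymm hjl), if_neg (ne_of_gt hjl)]; exact hyj
        rw [hz, smul_zero]
    · rw [if_neg hP, zero_mul, zero_smul]
  -- both nondegenerate
  rw [csFun_eq_single hx, csFun_eq_single hy, simpJoinC_single, one_mul]

  by_cases hG : ∃ l : Fin n, x l = CubeF.zero ∧ (∀ j, j < l → x j ≠ CubeF.zero) ∧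
      y l = CubeF.one ∧ (∀ j, y j = CubeF.mid → l < j)
  · obtain ⟨l0, hx0, hmin, hy1, hmidy⟩ := hG
    -- basic facts
    have hmidx : ∀ j, x j = CubeF.mid → j < l0 := by
      intro j hj
      rcases lt_trichotomy j l0 with h' | h' | h'
      · exact h'
      · exfalso; rw [h', hx0] at hj; cases hj
      · exact absurd ⟨l0, j, h', hx0, hj⟩ hx
    have hpx : pIdx x = Fin.castSucc l0 := by
      apply pIdx_eq
      · intro j hj
        exact hmin j (by simpa using hj)
      · intro hk; exact hx0
    have hzy : ∀ j, y j = CubeF.zero → l0 < j := by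
      intro j hj
      have hxj : x j = CubeF.zero := by
        have := hle j; rw [hj] at this; exact cell_zero this
      rcases lt_trichotomy j l0 with h' | h' | h'
      · exact absurd hxj (hmin j h')
      · exfalso; rw [h', hy1] at hj; cases hj
      · exact h'
    have hpy_gt : (l0 : ℕ) < (pIdx y : ℕ) := by
      by_contra hc
      push_neg at hc
      have hlt : ((pIdx y : ℕ)) < n := lt_of_le_of_lt hc l0.isLt
      have h2 := hzy ⟨pIdx y, hlt⟩ (x_pIdx y hlt)
      have h3 : (l0 : ℕ) < (pIdx y : ℕ) := h2
      omega
    set Z : CubeB n := fun k => if k < l0 then x k else if k = l0 then CubeF.mid else y k with hZ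
    have hpz : pIdx Z = pIdx y := by
      apply pIdx_eq
      · intro j hj
        by_cases hjl : j < l0
        · show (if j < l0 then x j else if j = l0 then CubeF.mid else y j) ≠ _
          rw [if_pos hjl]; exact hmin j hjl
        · by_cases hje : j = l0
          · show (if j < l0 then x j else if j = l0 then CubeF.mid else y j) ≠ _
            rw [if_neg hjl, if_pos hje]; simp
          · show (if j < l0 then x j else if j = l0 then CubeF.mid else y j) ≠ _
            rw [if_neg hjl, if_neg hje]; exact ne_zero_of_lt_pIdx y j hj
      · intro hk
        have hjl : ¬ ((⟨pIdx y, hk⟩ : Fin n) < l0) := by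
          rw [Fin.lt_def]; simp; omega
        have hje : (⟨pIdx y, hk⟩ : Fin n) ≠ l0 := by
          intro e
          have : ((pIdx y : ℕ)) = (l0 : ℕ) := by rw [← e]
          omega
        show (if _ < l0 then _ else if _ = l0 then CubeF.mid else y _) = _
        rw [if_neg hjl, if_neg hje]; exact x_pIdx y hk
    have hzmid : ∀ j, (Z j = CubeF.mid ↔
        (x j = CubeF.mid ∧ j < l0) ∨ j = l0 ∨ (y j = CubeF.mid ∧ l0 < j)) := by
      intro j
      rcases lt_trichotomy j l0 with h' | h' | h'
      · show (if j < l0 then x j else _) = _ ↔ _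
        rw [if_pos h']
        constructor
        · intro hm; exact Or.inl ⟨hm, h'⟩
        · rintro (⟨hm, _⟩ | h'' | ⟨_, h''⟩)
          · exact hm
          · exact absurd h'' (ne_of_lt h')
          · exact absurd h'' (asymm h')
      · show (if j < l0 then x j else if j = l0 then CubeF.mid else y j) = _ ↔ _
        rw [if_neg (by rw [h']; exact lt_irrefl l0), if_pos h']
        simp [h']
      · show (if j < l0 then x j else if j = l0 then CubeF.mid else y j) = _ ↔ _
        rw [if_neg (asymm h'), if_neg (ne_of_gt h')]
        constructor
        · intro hm; exact Or.inr (Or.inr ⟨hm, h'⟩)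
        · rintro (⟨_, h''⟩ | h'' | ⟨hm, _⟩)
          · exact absurd h'' (asymm h')
          · exact absurd h'' (ne_of_gt h')
          · exact hm
    have hDgz : ¬ ∃ i j : Fin n, i < j ∧ Z i = CubeF.zero ∧ Z j = CubeF.mid := by
      rintro ⟨i, j, hij, hzi, hzj⟩
      have hi : l0 < i ∧ y i = CubeF.zero := by
        rcases lt_trichotomy i l0 with h' | h' | h'
        · exfalso
          apply hmin i h'
          have : (if i < l0 then x i else if i = l0 then CubeF.mid else y i) = CubeF.zero := hzi
          rwa [if_pos h'] at this
        · exfalso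
          have : (if i < l0 then x i else if i = l0 then CubeF.mid else y i) = CubeF.zero := hzi
          rw [if_neg (by rw [h']; exact lt_irrefl l0), if_pos h'] at this
          cases this
        · have : (if i < l0 then x i else if i = l0 then CubeF.mid else y i) = CubeF.zero := hzi
          rw [if_neg (asymm h'), if_neg (ne_of_gt h')] at this
          exact ⟨h', this⟩
      have hj : y j = CubeF.mid := by
        have h' : l0 < j := hi.1.trans hij
        have : (if j < l0 then x j else if j = l0 then CubeF.mid else y j) = CubeF.mid := hzj
        rwa [if_neg (asymm h'), if_neg (ne_of_gt h')] at this
      exact hy ⟨i, j, hij, hi.2, hj⟩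
    -- collapse the sum
    rw [Finset.sum_eq_single l0]
    rotate_left
    · intro b _ hb
      by_cases hP : (∀ j, j < b → y j ≠ CubeF.mid) ∧ (∀ j, b < j → x j ≠ CubeF.mid)
      · by_cases hJ : joinF (x b) (y b) = 0
        · rw [hJ, mul_zero, zero_smul]
        · obtain ⟨hxb, hyb⟩ := joinF_cases (hle b) hJ
          have hlb : l0 < b := by
            rcases lt_trichotomy b l0 with h' | h' | h'
            · exact absurd hxb (hmin b h')
            · exact absurd h' hb
            · exact h'
          have hz : csFun n
              (fun k => if k < b then x k else if k = b then CubeF.mid else y k) = 0 := by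
            apply csFun_eq_zero
            refine ⟨l0, b, hlb, ?_, ?_⟩
            · rw [if_pos hlb]; exact hx0
            · rw [if_neg (lt_irrefl b), if_pos rfl]
          rw [hz, smul_zero]
      · rw [if_neg hP, zero_mul, zero_smul]
    · intro hl0; exact absurd (Finset.mem_univ l0) hl0
    -- the remaining term
    have hcond : (∀ j, j < l0 → y j ≠ CubeF.mid) ∧ (∀ j, l0 < j → x j ≠ CubeF.mid) :=
      ⟨fun j hj hm => absurd (hmidy j hm) (asymm hj),
       fun j hj hm => absurd (hmidx j hm) (asymm hj)⟩
    rw [if_pos hcond, hx0, hy1, one_mul]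
    have hcsZ : csFun n
        (fun k => if k < l0 then x k else if k = l0 then CubeF.mid else y k) =
        Finsupp.single (csSet Z) 1 := csFun_eq_single hDgz
    rw [hcsZ]
    -- now the right-hand side
    have sbound : ∀ a ∈ csSet x, (a : ℕ) ≤ (l0 : ℕ) := by
      intro a ha
      rcases mem_csSet.mp ha with rfl | ⟨i, hmi, rfl⟩
      · rw [hpx]; simp
      · simpa using le_of_lt (hmidx i hmi)
    have tbound : ∀ b ∈ csSet y, (l0 : ℕ) < (b : ℕ) := by
      intro b hb
      rcases mem_csSet.mp hb with rfl | ⟨i, hmi, rfl⟩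
      · exact hpy_gt
      · simpa using hmidy i hmi
    have hdisj : csSet x ∩ csSet y = ∅ := by
      rw [Finset.eq_empty_iff_forall_notMem]
      intro a ha
      rw [Finset.mem_inter] at ha
      have h1 := sbound a ha.1
      have h2 := tbound a ha.2
      omega
    have hinv : ((csSet x ×ˢ csSet y).filter fun p => p.2 < p.1) = ∅ := by
      rw [Finset.filter_eq_empty_iff]
      intro p hp
      rw [Finset.mem_product] at hp
      have h1 := sbound _ hp.1
      have h2 := tbound _ hp.2
      rw [Fin.lt_def]
      omega
    have hcard : (csSet x).card = cubeDeg x + 1 := by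
      unfold csSet cubeDeg
      rw [Finset.card_insert_of_notMem, Finset.card_image_of_injective _
        (Fin.castSucc_injective n)]
      intro hmem
      obtain ⟨i, hi, he⟩ := Finset.mem_image.mp hmem
      rw [Finset.mem_filter] at hi
      rw [hpx] at he
      have : i = l0 := Fin.castSucc_injective n he
      rw [this, hx0] at hi
      cases hi.2
    have hunion : csSet Z = csSet x ∪ csSet y := by
      ext a
      rw [Finset.mem_union, mem_csSet, mem_csSet, mem_csSet, hpz]
      constructor
      · rintro (rfl | ⟨i, hmi, rfl⟩)
        · exact Or.inr (Or.inl rfl)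
        · rcases (hzmid i).mp hmi with ⟨hm, _⟩ | rfl | ⟨hm, _⟩
          · exact Or.inl (Or.inr ⟨i, hm, rfl⟩)
          · exact Or.inl (Or.inl hpx.symm)
          · exact Or.inr (Or.inr ⟨i, hm, rfl⟩)
      · rintro ((rfl | ⟨i, hmi, rfl⟩) | (rfl | ⟨i, hmi, rfl⟩))
        · exact Or.inr ⟨l0, (hzmid l0).mpr (Or.inr (Or.inl rfl)), hpx.symm⟩
        · exact Or.inr ⟨i, (hzmid i).mpr (Or.inl ⟨hmi, hmidx i hmi⟩), rfl⟩
        · exact Or.inl rfl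
        · exact Or.inr ⟨i, (hzmid i).mpr (Or.inr (Or.inr ⟨hmi, hmidy i hmi⟩)), rfl⟩
    unfold simpJoinFun
    rw [if_pos ⟨hdisj, ⟨pIdx x, mem_csSet.mpr (Or.inl rfl)⟩,
      ⟨pIdx y, mem_csSet.mpr (Or.inl rfl)⟩⟩, hinv, hcard, hunion]
    simp [joinF]
  · -- no valid join position: both sides vanish
    have hLHS : ∀ l : Fin n,
        ((if (∀ j, j < l → y j ≠ CubeF.mid) ∧ (∀ j, l < j → x j ≠ CubeF.mid) then (1 : ℤ)
            else 0) * joinF (x l) (y l)) •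
          csFun n (fun k => if k < l then x k else if k = l then CubeF.mid else y k) = 0 := by
      intro l
      by_cases hP : (∀ j, j < l → y j ≠ CubeF.mid) ∧ (∀ j, l < j → x j ≠ CubeF.mid)
      · by_cases hJ : joinF (x l) (y l) = 0
        · rw [hJ, mul_zero, zero_smul]
        · obtain ⟨hx0, hy1⟩ := joinF_cases (hle l) hJ
          by_cases hz : csFun n
              (fun k => if k < l then x k else if k = l then CubeF.mid else y k) = 0
          · rw [hz, smul_zero]
          · exfalso
            have hDgz : ¬ ∃ i j : Fin n, i < j ∧
                (if i < l then x i else if i = l then CubeF.mid else y i) = CubeF.zero ∧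
                (if j < l then x j else if j = l then CubeF.mid else y j) = CubeF.mid := by
              intro hd
              exact hz (csFun_eq_zero hd)
            apply hG
            refine ⟨l, hx0, ?_, hy1, ?_⟩
            · intro j hj hxj
              apply hDgz
              refine ⟨j, l, hj, ?_, ?_⟩
              · rw [if_pos hj]; exact hxj
              · rw [if_neg (lt_irrefl l), if_pos rfl]
            · intro j hj
              rcases lt_trichotomy j l with h' | h' | h'
              · exact absurd hj (hP.1 j h')
              · exfalso; rw [h', hy1] at hj; cases hj
              · exact h'
      · rw [if_neg hP, zero_mul, zero_smul]
    rw [Finset.sum_eq_zero fun l _ => hLHS l, smul_zero]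
    have hmeet : ¬ (csSet x ∩ csSet y = ∅ ∧ (csSet x).Nonempty ∧ (csSet y).Nonempty) := by
      rintro ⟨hdisj, -, -⟩
      have hne : ∀ a, a ∈ csSet x → a ∉ csSet y := by
        intro a h1 h2
        rw [Finset.eq_empty_iff_forall_notMem] at hdisj
        exact hdisj a (Finset.mem_inter.mpr ⟨h1, h2⟩)
      apply hG
      by_cases hpxn : (pIdx x : ℕ) < n
      · set l0 : Fin n := ⟨pIdx x, hpxn⟩ with hl0
        have hx0 : x l0 = CubeF.zero := x_pIdx x hpxn
        have hmin : ∀ j, j < l0 → x j ≠ CubeF.zero := fun j hj => ne_zero_of_lt_pIdx x j hj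
        have hcastl0 : Fin.castSucc l0 = pIdx x := by
          apply Fin.ext; simp [hl0]
        have hy1 : y l0 = CubeF.one := by
          cases hyl : y l0 with
          | zero =>
            exfalso
            have hpyx : pIdx y = pIdx x := by
              apply pIdx_eq
              · intro j hj hyj
                have hxj : x j = CubeF.zero := by
                  have := hle j; rw [hyj] at this; exact cell_zero this
                have := pIdx_le hxj
                omega
              · intro hk
                exact hyl
            exact hne (pIdx x) (mem_csSet.mpr (Or.inl rfl))
              (mem_csSet.mpr (Or.inl hpyx.symm))
          | mid =>
            exfalso
            exact hne (pIdx x) (mem_csSet.mpr (Or.inl rfl))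
              (mem_csSet.mpr (Or.inr ⟨l0, hyl, hcastl0⟩))
          | one => rfl
        refine ⟨l0, hx0, hmin, hy1, ?_⟩
        intro j hj
        rcases lt_trichotomy j l0 with h' | h' | h'
        · exfalso
          cases hxj : x j with
          | zero => exact hmin j h' hxj
          | mid =>
            exact hne (Fin.castSucc j) (mem_csSet.mpr (Or.inr ⟨j, hxj, rfl⟩))
              (mem_csSet.mpr (Or.inr ⟨j, hj, rfl⟩))
          | one =>
            have := hle j
            rw [hj, hxj] at this
            simp [cellVal] at this
        · exfalso; rw [h', hy1] at hj; cases hj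
        · exact h'
      · exfalso
        have hpx' : ((pIdx x : ℕ)) = n := by
          have := (pIdx x).isLt
          omega
        have hpyx : pIdx y = pIdx x := by
          apply pIdx_eq
          · intro j hj hyj
            have hxj : x j = CubeF.zero := by
              have := hle j; rw [hyj] at this; exact cell_zero this
            have := pIdx_le hxj
            have := j.isLt
            omega
          · intro hk
            exact absurd hk (by omega)
        exact hne (pIdx x) (mem_csSet.mpr (Or.inl rfl)) (mem_csSet.mpr (Or.inl hpyx.symm))
    unfold simpJoinFun
    rw [if_neg hmeet, smul_zero]
end

section
/- The Cartan–Serre map does not commute with the join in general: for the basis elements x = [1] ⊗ [1] and y = [0] ⊗ [0,1] of C(□^2) one has CS(x) ∗ CS(y) = 0 while CS(x ∗ y) = ±[0,1,2] ≠ 0; in particular CS(x ∗ y) ≠ CS(x) ∗ CS(y). -/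
open CartanSerre in
/-- The Cartan–Serre map does not commute with the join in general:
for `x = [1] ⊗ [1]` and `y = [0] ⊗ [0,1]` in `C(□²)` one has `CS(x) ∗ CS(y) = 0` while
`CS(x ∗ y) = ±[0,1,2] ≠ 0`; in particular `CS(x ∗ y) ≠ CS(x) ∗ CS(y)`. -/
theorem cartanSerre_not_join_map (x y : CubeB 2)
    (hx : x = ![CubeF.one, CubeF.one]) (hy : y = ![CubeF.zero, CubeF.mid]) :
    simpJoinC 2 (csFun 2 x) (csFun 2 y) = 0 ∧
    (csL 2 (cubeJoinFun 2 x y) = Finsupp.single ({0, 1, 2} : Finset (Fin 3)) 1 ∨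
      csL 2 (cubeJoinFun 2 x y) = -Finsupp.single ({0, 1, 2} : Finset (Fin 3)) 1) ∧
    csL 2 (cubeJoinFun 2 x y) ≠ 0 ∧
    csL 2 (cubeJoinFun 2 x y) ≠ simpJoinC 2 (csFun 2 x) (csFun 2 y) := by
  subst hx hy
  have hy0 : csFun 2 ![CubeF.zero, CubeF.mid] = 0 := by
    rw [csFun, if_pos ⟨0, 1, by decide, by decide, by decide⟩]
  have hmid : cubeJoinFun 2 ![CubeF.one, CubeF.one] ![CubeF.zero, CubeF.mid] =
      -Finsupp.single (![CubeF.mid, CubeF.mid] : CubeB 2) 1 := by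
    rw [cubeJoinFun]
    rw [Fin.sum_univ_two]
    have h0 : (fun j : Fin 2 => if j < (0 : Fin 2) then (![CubeF.one, CubeF.one] : CubeB 2) j
        else if j = 0 then CubeF.mid else (![CubeF.zero, CubeF.mid] : CubeB 2) j)
        = (![CubeF.mid, CubeF.mid] : CubeB 2) := by
      funext j; fin_cases j <;> rfl
    rw [h0]
    have hd : cubeDeg (![CubeF.one, CubeF.one] : CubeB 2) = 0 := by decide
    rw [hd]
    norm_num [joinF, if_pos, show (![CubeF.one, CubeF.one] : CubeB 2) 0 = CubeF.one from rfl,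
      show (![CubeF.one, CubeF.one] : CubeB 2) 1 = CubeF.one from rfl,
      show (![CubeF.zero, CubeF.mid] : CubeB 2) 0 = CubeF.zero from rfl,
      show (![CubeF.zero, CubeF.mid] : CubeB 2) 1 = CubeF.mid from rfl]
    intro hc
    exact absurd hc (by decide)
  have hcs : csFun 2 (![CubeF.mid, CubeF.mid] : CubeB 2)
      = Finsupp.single ({0, 1, 2} : Finset (Fin 3)) 1 := by
    rw [csFun, if_neg (by decide)]
    congr 1
    decide
  have hL : csL 2 (cubeJoinFun 2 ![CubeF.one, CubeF.one] ![CubeF.zero, CubeF.mid])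
      = -Finsupp.single ({0, 1, 2} : Finset (Fin 3)) 1 := by
    rw [hmid, map_neg, csL, Finsupp.lift_apply, Finsupp.sum_single_index (by simp), one_smul, hcs]
  have hjoin : simpJoinC 2 (csFun 2 ![CubeF.one, CubeF.one]) (csFun 2 ![CubeF.zero, CubeF.mid])
      = 0 := by
    rw [hy0, simpJoinC]
    simp
  refine ⟨hjoin, Or.inr hL, ?_, ?_⟩
  · rw [hL]
    intro h
    have h2 := DFunLike.congr_fun h ({0, 1, 2} : Finset (Fin 3))
    simp at h2
  · rw [hL, hjoin]
    intro h
    have h2 := DFunLike.congr_fun h ({0, 1, 2} : Finset (Fin 3))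
    simp at h2
end
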